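/- arXiv:1812.06329 — 3 statements merged into one kernel-verified Lean document; each statement's English description precedes it below -/
import Mathlib

section
/- Under layer based partition, the total communication volume of any rectangular partition into p ≥ 2 rectangles strictly exceeds that of any layer based partition: C_REC > C_LBP = 2N². -/
theorem rect_gt_lbp (N : ℕ) (p : ℕ) (hN : 0 < N) (hp : 2 ≤ p)
    (k : Fin p → ℕ) (hk : ∑ i, k i = N)
    (h w : Fin p → ℝ) (hh : ∀ i, 0 < h i) (hw : ∀ i, 0 < w i)
    (harea : ∑ i, h i * w i = (N : ℝ) ^ 2) :
    (∑ i, (h i + w i) * (N : ℝ)) > ∑ i, 2 * (N : ℝ) * (k i : ℝ) ∧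
      (∑ i, 2 * (N : ℝ) * (k i : ℝ)) = 2 * (N : ℝ) ^ 2 := by
  have hlbp : (∑ i, 2 * (N : ℝ) * (k i : ℝ)) = 2 * (N : ℝ) ^ 2 := by
    have : (∑ i, 2 * (N : ℝ) * (k i : ℝ)) = 2 * (N : ℝ) * ((N : ℕ) : ℝ) := by
      rw [← Finset.mul_sum, ← Nat.cast_sum, hk]
    rw [this]; ring
  refine ⟨?_, hlbp⟩
  rw [hlbp]
  set s : Fin p → ℝ := fun i => Real.sqrt (h i * w i) with hs_def
  have hs : ∀ i, 0 < s i := fun i => Real.sqrt_pos.mpr (mul_pos (hh i) (hw i))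
  have hs2 : ∀ i, s i ^ 2 = h i * w i := fun i =>
    Real.sq_sqrt (le_of_lt (mul_pos (hh i) (hw i)))
  have hNpos : (0:ℝ) < (N:ℝ) := by exact_mod_cast hN
  -- AM-GM termwise
  have hamgm : ∀ i, 2 * s i ≤ h i + w i := by
    intro i
    have h1 := sq_nonneg (Real.sqrt (h i) - Real.sqrt (w i))
    have e1 : Real.sqrt (h i) ^ 2 = h i := Real.sq_sqrt (hh i).le
    have e2 : Real.sqrt (w i) ^ 2 = w i := Real.sq_sqrt (hw i).le
    have e3 : s i = Real.sqrt (h i) * Real.sqrt (w i) := Real.sqrt_mul (hh i).le _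
    nlinarith [h1, e1, e2, e3]
  have hsumpos : 0 < ∑ i, s i :=
    Finset.sum_pos (fun i _ => hs i) ⟨⟨0, by omega⟩, Finset.mem_univ _⟩
  -- (∑ s)^2 > ∑ s^2 = N^2
  have hsq : (N:ℝ)^2 < (∑ i, s i)^2 := by
    have key : ∑ i, s i ^ 2 < ∑ i, s i * (∑ j, s j) := by
      apply Finset.sum_lt_sum
      · intro i _
        have : s i ≤ ∑ j, s j :=
          Finset.single_le_sum (fun j _ => (hs j).le) (Finset.mem_univ i)
        nlinarith [hs i]
      · refine ⟨⟨0, by omega⟩, Finset.mem_univ _, ?_⟩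
        set i0 : Fin p := ⟨0, by omega⟩
        have hj : (⟨1, by omega⟩ : Fin p) ∈ Finset.univ.erase i0 := by
          simp [Finset.mem_erase, i0, Fin.ext_iff]
        have herase : 0 < ∑ j ∈ Finset.univ.erase i0, s j :=
          Finset.sum_pos (fun j _ => hs j) ⟨_, hj⟩
        have hsplit : s i0 + ∑ j ∈ Finset.univ.erase i0, s j = ∑ j, s j :=
          Finset.add_sum_erase _ _ (Finset.mem_univ i0)
        have : s i0 < ∑ j, s j := by linarith
        nlinarith [hs i0]
    calc (N:ℝ)^2 = ∑ i, s i ^ 2 := by rw [← harea]; exact Finset.sum_congr rfl fun i _ => (hs2 i).symm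
      _ < ∑ i, s i * (∑ j, s j) := key
      _ = (∑ i, s i)^2 := by rw [← Finset.sum_mul]; ring
  have hsum : (N:ℝ) < ∑ i, s i := lt_of_pow_lt_pow_left₀ 2 hsumpos.le hsq
  have h2s : 2 * ∑ i, s i ≤ ∑ i, (h i + w i) := by
    rw [Finset.mul_sum]
    exact Finset.sum_le_sum fun i _ => hamgm i
  have : ∑ i, (h i + w i) * (N:ℝ) = (∑ i, (h i + w i)) * (N:ℝ) := by
    rw [Finset.sum_mul]
  rw [this]
  nlinarith
end

section
/- In the PCCS mode with p processors, the system k_i·(N²·w_i·T_cp + 2·N·z_i·T_cm) = k_{i-1}·(N²·w_{i-1}·T_cp + 2·N·z_{i-1}·T_cm) for i = 2,...,p together with ∑ k_i = N has the unique solution k_1 = N / (1 + ∑_{i=2}^p ∏_{j=2}^i (N·w_{j-1}·T_cp + 2·z_{j-1}·T_cm)/(N·w_j·T_cp + 2·z_j·T_cm)) and k_i = (∏_{j=2}^i (N·w_{j-1}·T_cp + 2·z_{j-1}·T_cm)/(N·w_j·T_cp + 2·z_j·T_cm))·k_1. -/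
theorem pccs_solution (N Tcp Tcm : ℝ) (hN : 0 < N) (hTcp : 0 < Tcp) (hTcm : 0 < Tcm)
    (p : ℕ) (hp : 1 ≤ p) (w z : ℕ → ℝ) (hw : ∀ i, 0 < w i) (hz : ∀ i, 0 < z i)
    (k : ℕ → ℝ)
    (heq : ∀ i ∈ Finset.Icc 2 p,
      k i * (N ^ 2 * w i * Tcp + 2 * N * z i * Tcm)
        = k (i - 1) * (N ^ 2 * w (i - 1) * Tcp + 2 * N * z (i - 1) * Tcm))
    (hsum : ∑ i ∈ Finset.Icc 1 p, k i = N) :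
    k 1 = N / (1 + ∑ i ∈ Finset.Icc 2 p, ∏ j ∈ Finset.Icc 2 i,
        (N * w (j - 1) * Tcp + 2 * z (j - 1) * Tcm) / (N * w j * Tcp + 2 * z j * Tcm)) ∧
    ∀ i ∈ Finset.Icc 2 p, k i = (∏ j ∈ Finset.Icc 2 i,
        (N * w (j - 1) * Tcp + 2 * z (j - 1) * Tcm) / (N * w j * Tcp + 2 * z j * Tcm)) * k 1 := by
  set r : ℕ → ℝ := fun j =>
    (N * w (j - 1) * Tcp + 2 * z (j - 1) * Tcm) / (N * w j * Tcp + 2 * z j * Tcm) with hr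
  have hd : ∀ j : ℕ, 0 < N * w j * Tcp + 2 * z j * Tcm := fun j => by have := hw j; have := hz j; positivity
  have hrpos : ∀ j : ℕ, 0 < r j := fun j => div_pos (hd _) (hd _)
  -- recurrence
  have hrec : ∀ i ∈ Finset.Icc 2 p, k i = r i * k (i - 1) := by
    intro i hi
    have h := heq i hi
    have h1 : N ^ 2 * w i * Tcp + 2 * N * z i * Tcm
        = N * (N * w i * Tcp + 2 * z i * Tcm) := by ring
    have h2 : N ^ 2 * w (i-1) * Tcp + 2 * N * z (i-1) * Tcm
        = N * (N * w (i-1) * Tcp + 2 * z (i-1) * Tcm) := by ring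
    rw [h1, h2] at h
    have hne : (N * w i * Tcp + 2 * z i * Tcm) ≠ 0 := (hd i).ne'
    rw [hr]
    dsimp only
    rw [div_mul_eq_mul_div, eq_div_iff hne]
    apply mul_left_cancel₀ hN.ne'
    linear_combination h
  have hprod : ∀ i, 2 ≤ i → i ≤ p → k i = (∏ j ∈ Finset.Icc 2 i, r j) * k 1 := by
    intro i h2 hle
    induction i with
    | zero => omega
    | succ n ih =>
      rcases Nat.lt_or_ge n 2 with hn | hn
      · interval_cases n
        · omega
        · have := hrec 2 (Finset.mem_Icc.mpr ⟨le_refl 2, hle⟩)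
          simpa using this
      · have hkn := ih hn (by omega)
        have := hrec (n+1) (Finset.mem_Icc.mpr ⟨by omega, hle⟩)
        simp only [Nat.add_sub_cancel] at this
        rw [this, hkn, Finset.prod_Icc_succ_top (by omega : 2 ≤ n + 1)]
        ring
  have hprod' : ∀ i ∈ Finset.Icc 2 p, k i = (∏ j ∈ Finset.Icc 2 i, r j) * k 1 := by
    intro i hi
    obtain ⟨h2, hle⟩ := Finset.mem_Icc.mp hi
    exact hprod i h2 hle
  refine ⟨?_, hprod'⟩
  set S := ∑ i ∈ Finset.Icc 2 p, ∏ j ∈ Finset.Icc 2 i, r j with hS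
  have hSpos : 0 ≤ S := Finset.sum_nonneg fun i _ =>
    Finset.prod_nonneg fun j _ => (hrpos j).le
  have hDne : (1 : ℝ) + S ≠ 0 := by positivity
  have hsplit : Finset.Icc 1 p = insert 1 (Finset.Icc 2 p) := by
    ext x; simp [Finset.mem_Icc, Finset.mem_insert]; omega
  rw [hsplit, Finset.sum_insert (by simp)] at hsum
  have : k 1 + S * k 1 = N := by
    rw [← hsum]
    have : ∑ i ∈ Finset.Icc 2 p, k i = S * k 1 := by
      rw [hS, Finset.sum_mul]
      exact Finset.sum_congr rfl hprod'
    rw [this]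
  field_simp
  linarith [this]
end

section
/- In the SCSS mode, assuming N·w_i·T_cp > 2·z_i·T_cm for all i, the system k_{i-1}·N²·w_{i-1}·T_cp = k_i·N²·w_i·T_cp + 2·k_{i-1}·N·z_{i-1}·T_cm for i = 2,...,p with ∑ k_i = N has the unique solution k_i = (∏_{j=2}^i (N·w_{j-1}·T_cp − 2·z_{j-1}·T_cm)/(N·w_j·T_cp))·k_1 with k_1 = N/(1 + ∑_{i=2}^p ∏_{j=2}^i (N·w_{j-1}·T_cp − 2·z_{j-1}·T_cm)/(N·w_j·T_cp)), and all k_i are strictly positive. -/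
theorem scss_solution (N Tcp Tcm : ℝ) (hN : 0 < N) (hTcp : 0 < Tcp) (hTcm : 0 < Tcm)
    (p : ℕ) (hp : 1 ≤ p) (w z : ℕ → ℝ) (hw : ∀ i, 0 < w i) (hz : ∀ i, 0 < z i)
    (hpos : ∀ i, N * w i * Tcp > 2 * z i * Tcm)
    (k : ℕ → ℝ)
    (heq : ∀ i ∈ Finset.Icc 2 p,
      k (i - 1) * N ^ 2 * w (i - 1) * Tcp
        = k i * N ^ 2 * w i * Tcp + 2 * k (i - 1) * N * z (i - 1) * Tcm)
    (hsum : ∑ i ∈ Finset.Icc 1 p, k i = N) :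
    (k 1 = N / (1 + ∑ i ∈ Finset.Icc 2 p, ∏ j ∈ Finset.Icc 2 i,
        (N * w (j - 1) * Tcp - 2 * z (j - 1) * Tcm) / (N * w j * Tcp)) ∧
     ∀ i ∈ Finset.Icc 2 p, k i = (∏ j ∈ Finset.Icc 2 i,
        (N * w (j - 1) * Tcp - 2 * z (j - 1) * Tcm) / (N * w j * Tcp)) * k 1) ∧
    ∀ i ∈ Finset.Icc 1 p, 0 < k i := by
  set r : ℕ → ℝ := fun j => (N * w (j - 1) * Tcp - 2 * z (j - 1) * Tcm) / (N * w j * Tcp)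
    with hr_def
  have hrpos : ∀ j, 0 < r j := fun j => div_pos (by have := hpos (j - 1); linarith)
    (mul_pos (mul_pos hN (hw j)) hTcp)
  -- k i = (∏ j in Icc 2 i, r j) * k 1 for 1 ≤ i ≤ p
  have hk : ∀ i, 1 ≤ i → i ≤ p → k i = (∏ j ∈ Finset.Icc 2 i, r j) * k 1 := by
    intro i hi
    induction i, hi using Nat.le_induction with
    | base => intro _; simp
    | succ n hn ih =>
      intro hnp
      have hnle : n ≤ p := le_trans (Nat.le_succ n) hnp
      have hmem : n + 1 ∈ Finset.Icc 2 p := Finset.mem_Icc.mpr ⟨by omega, hnp⟩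
      have h := heq (n + 1) hmem
      simp only [Nat.add_sub_cancel] at h
      have hkn1 : k (n + 1) = r (n + 1) * k n := by
        rw [hr_def]
        simp only [Nat.add_sub_cancel]
        have hden : N * w (n + 1) * Tcp ≠ 0 := ne_of_gt (mul_pos (mul_pos hN (hw (n+1))) hTcp)
        rw [div_mul_eq_mul_div, eq_div_iff hden]
        apply mul_left_cancel₀ hN.ne'
        linear_combination -h
      rw [hkn1, ih hnle, Finset.prod_Icc_succ_top (by omega : 2 ≤ n + 1)]
      ring
  have hprodpos : ∀ i, 0 < ∏ j ∈ Finset.Icc 2 i, r j := fun i =>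
    Finset.prod_pos (fun j _ => hrpos j)
  set S : ℝ := ∑ i ∈ Finset.Icc 2 p, ∏ j ∈ Finset.Icc 2 i, r j with hS_def
  have hSpos : 0 ≤ S := Finset.sum_nonneg (fun i _ => (hprodpos i).le)
  have h1S : (0:ℝ) < 1 + S := by linarith
  -- sum relation
  have hsum2 : k 1 * (1 + S) = N := by
    have hsplit : ∑ i ∈ Finset.Icc 1 p, k i = k 1 + ∑ i ∈ Finset.Icc 2 p, k i := by
      rw [show Finset.Icc 1 p = insert 1 (Finset.Icc 2 p) by
        ext x; simp [Finset.mem_Icc, Finset.mem_insert]; omega]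
      rw [Finset.sum_insert (by simp)]
    have hsum3 : ∑ i ∈ Finset.Icc 2 p, k i = S * k 1 := by
      rw [hS_def, Finset.sum_mul]
      apply Finset.sum_congr rfl
      intro i hi
      have := Finset.mem_Icc.mp hi
      exact hk i (by omega) this.2
    rw [hsplit, hsum3] at hsum
    linarith
  have hk1 : k 1 = N / (1 + S) := by
    field_simp
    linarith
  have hk1pos : 0 < k 1 := hk1 ▸ div_pos hN h1S
  refine ⟨⟨hk1, fun i hi => ?_⟩, fun i hi => ?_⟩
  · have := Finset.mem_Icc.mp hi
    exact hk i (by omega) this.2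
  · have h := Finset.mem_Icc.mp hi
    rw [hk i h.1 h.2]
    exact mul_pos (hprodpos i) hk1pos
end
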